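/- Let 1 ≤ p < n, let r be an integer with p ≤ r < n such that |λ_p|/2 ≤ λ_p − λ_{r+1}, and assume 0 < 4‖E‖ ≤ δ_p := λ_p − λ_{p+1} ≤ |λ_p|/4. With x₀ = λ_p − δ_p/2 and T = 2σ₁, one has ∫_{−T}^{T} ‖ Σ over pairs (i,j) with exactly one of i,j in {1,…,r} of ( (u_iᵀ E u_j)/((x₀+it−λ_i)(x₀+it−λ_j)) ) u_i u_jᵀ ‖ dt ≤ (64‖E‖/|λ_p|)·log( (2T+δ_p)/δ_p ). -/

import Mathlib

open Matrix

/-- The spectral norm (ℓ²→ℓ² operator norm) of a matrix. -/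
noncomputable def specNorm {𝕜 : Type*} [RCLike 𝕜] {m n : ℕ}
    (M : Matrix (Fin m) (Fin n) 𝕜) : ℝ :=
  ‖LinearMap.toContinuousLinearMap (Matrix.toEuclideanLin M)‖

open scoped Matrix.Norms.L2Operator

lemma specNorm_eq {𝕜 : Type*} [RCLike 𝕜] {m n : ℕ} (M : Matrix (Fin m) (Fin n) 𝕜) :
    specNorm M = ‖M‖ := rfl

lemma specNorm_le_bound {𝕜 : Type*} [RCLike 𝕜] {m n : ℕ} (M : Matrix (Fin m) (Fin n) 𝕜)
    {C : ℝ} (hC : 0 ≤ C)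
    (h : ∀ x : EuclideanSpace 𝕜 (Fin n),
      ‖(WithLp.equiv 2 (Fin m → 𝕜)).symm (M *ᵥ (WithLp.equiv 2 (Fin n → 𝕜)) x)‖ ≤ C * ‖x‖) :
    specNorm M ≤ C := by
  apply ContinuousLinearMap.opNorm_le_bound _ hC
  intro x
  exact h x

lemma specNorm_mulVec_le {𝕜 : Type*} [RCLike 𝕜] {m n : ℕ} (M : Matrix (Fin m) (Fin n) 𝕜)
    (x : EuclideanSpace 𝕜 (Fin n)) :
    ‖(WithLp.equiv 2 (Fin m → 𝕜)).symm (M *ᵥ (WithLp.equiv 2 (Fin n → 𝕜)) x)‖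
      ≤ specNorm M * ‖x‖ :=
  (LinearMap.toContinuousLinearMap (Matrix.toEuclideanLin M)).le_opNorm x

lemma specNorm_mul_le {𝕜 : Type*} [RCLike 𝕜] {n : ℕ} (M N : Matrix (Fin n) (Fin n) 𝕜) :
    specNorm (M * N) ≤ specNorm M * specNorm N := by
  simpa only [specNorm_eq] using Matrix.l2_opNorm_mul M N

lemma specNorm_add_le {𝕜 : Type*} [RCLike 𝕜] {n : ℕ} (M N : Matrix (Fin n) (Fin n) 𝕜) :
    specNorm (M + N) ≤ specNorm M + specNorm N := by
  simpa only [specNorm_eq] using norm_add_le M N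

lemma specNorm_nonneg {𝕜 : Type*} [RCLike 𝕜] {m n : ℕ} (M : Matrix (Fin m) (Fin n) 𝕜) :
    0 ≤ specNorm M := norm_nonneg _

lemma specNorm_map_ofReal_le {n : ℕ} (E : Matrix (Fin n) (Fin n) ℝ) :
    specNorm (E.map Complex.ofReal) ≤ specNorm E := by
  apply specNorm_le_bound _ (specNorm_nonneg E)
  intro x
  set xr : EuclideanSpace ℝ (Fin n) :=
    (WithLp.equiv 2 (Fin n → ℝ)).symm (fun k => (x k).re) with hxr
  set xi : EuclideanSpace ℝ (Fin n) :=
    (WithLp.equiv 2 (Fin n → ℝ)).symm (fun k => (x k).im) with hxi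
  have hentry : ∀ k, (E.map Complex.ofReal *ᵥ (WithLp.equiv 2 (Fin n → ℂ)) x) k
      = Complex.mk ((E *ᵥ (fun l => (x l).re)) k) ((E *ᵥ (fun l => (x l).im)) k) := by
    intro k
    simp only [mulVec, dotProduct, map_apply]
    rw [Complex.ext_iff]
    constructor
    · simp [Complex.re_sum]
    · simp [Complex.im_sum]
  have hnorm2 : ‖(WithLp.equiv 2 (Fin n → ℂ)).symm
        (E.map Complex.ofReal *ᵥ (WithLp.equiv 2 (Fin n → ℂ)) x)‖ ^ 2
      = ‖(WithLp.equiv 2 (Fin n → ℝ)).symm (E *ᵥ (WithLp.equiv 2 (Fin n → ℝ)) xr)‖ ^ 2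
        + ‖(WithLp.equiv 2 (Fin n → ℝ)).symm (E *ᵥ (WithLp.equiv 2 (Fin n → ℝ)) xi)‖ ^ 2 := by
    rw [EuclideanSpace.norm_eq, EuclideanSpace.norm_eq, EuclideanSpace.norm_eq]
    rw [Real.sq_sqrt (by positivity), Real.sq_sqrt (by positivity),
      Real.sq_sqrt (by positivity)]
    rw [← Finset.sum_add_distrib]
    apply Finset.sum_congr rfl
    intro k _
    have := hentry k
    simp only [WithLp.equiv_symm_apply, PiLp.toLp_apply] at this ⊢
    rw [this]
    rw [Complex.sq_norm, Complex.normSq_mk]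
    simp only [hxr, hxi, Equiv.apply_symm_apply, Real.norm_eq_abs, sq_abs]
    ring
  have hx2 : ‖x‖ ^ 2 = ‖xr‖ ^ 2 + ‖xi‖ ^ 2 := by
    rw [EuclideanSpace.norm_eq, EuclideanSpace.norm_eq, EuclideanSpace.norm_eq]
    rw [Real.sq_sqrt (by positivity), Real.sq_sqrt (by positivity),
      Real.sq_sqrt (by positivity)]
    rw [← Finset.sum_add_distrib]
    apply Finset.sum_congr rfl
    intro k _
    simp only [hxr, hxi, WithLp.equiv_symm_apply, PiLp.toLp_apply]
    rw [Complex.sq_norm, Complex.normSq_apply]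
    simp only [Real.norm_eq_abs, sq_abs]
    ring
  have h1 := specNorm_mulVec_le E xr
  have h2 := specNorm_mulVec_le E xi
  have key : ‖(WithLp.equiv 2 (Fin n → ℂ)).symm
        (E.map Complex.ofReal *ᵥ (WithLp.equiv 2 (Fin n → ℂ)) x)‖ ^ 2
      ≤ (specNorm E * ‖x‖) ^ 2 := by
    rw [hnorm2]
    have e1 : ‖(WithLp.equiv 2 (Fin n → ℝ)).symm (E *ᵥ (WithLp.equiv 2 (Fin n → ℝ)) xr)‖ ^ 2
        ≤ (specNorm E * ‖xr‖) ^ 2 := by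
      apply sq_le_sq' _ h1
      nlinarith [norm_nonneg ((WithLp.equiv 2 (Fin n → ℝ)).symm (E *ᵥ (WithLp.equiv 2 (Fin n → ℝ)) xr)), specNorm_nonneg E, norm_nonneg xr]
    have e2 : ‖(WithLp.equiv 2 (Fin n → ℝ)).symm (E *ᵥ (WithLp.equiv 2 (Fin n → ℝ)) xi)‖ ^ 2
        ≤ (specNorm E * ‖xi‖) ^ 2 := by
      apply sq_le_sq' _ h2
      nlinarith [norm_nonneg ((WithLp.equiv 2 (Fin n → ℝ)).symm (E *ᵥ (WithLp.equiv 2 (Fin n → ℝ)) xi)), specNorm_nonneg E, norm_nonneg xi]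
    calc _ ≤ (specNorm E * ‖xr‖) ^ 2 + (specNorm E * ‖xi‖) ^ 2 := by linarith
    _ = specNorm E ^ 2 * (‖xr‖ ^ 2 + ‖xi‖ ^ 2) := by ring
    _ = (specNorm E * ‖x‖) ^ 2 := by rw [mul_pow, hx2]
  have hxn : (0:ℝ) ≤ ‖x‖ := norm_nonneg x
  have hnn : (0:ℝ) ≤ specNorm E * ‖x‖ := mul_nonneg (specNorm_nonneg E) hxn
  exact (pow_le_pow_iff_left₀ (norm_nonneg _) hnn (two_ne_zero)).mp key

lemma euclid_sum_apply {ι : Type*} {𝕜 : Type*} [RCLike 𝕜] {m : Type*} [Fintype m]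
    (s : Finset ι) (f : ι → EuclideanSpace 𝕜 m) (k : m) :
    (∑ i ∈ s, f i) k = ∑ i ∈ s, f i k := by
  classical
  induction s using Finset.induction with
  | empty => rfl
  | insert _ _ h ih => rw [Finset.sum_insert h, Finset.sum_insert h, PiLp.add_apply, ih]

lemma specNorm_sum_proj_le {n : ℕ} (s : Finset ℕ) (u : ℕ → (Fin n → ℝ)) (c : ℕ → ℂ) {B : ℝ}
    (hB : 0 ≤ B)
    (hon : ∀ i ∈ s, ∀ j ∈ s, u i ⬝ᵥ u j = if i = j then 1 else 0)
    (hc : ∀ i ∈ s, ‖c i‖ ≤ B) :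
    specNorm (∑ i ∈ s, c i • (vecMulVec (u i) (u i)).map Complex.ofReal) ≤ B := by
  classical
  set v : ℕ → (Fin n → ℂ) := fun i k => ((u i k : ℝ) : ℂ) with hv
  set w : ℕ → EuclideanSpace ℂ (Fin n) := fun i => (WithLp.equiv 2 (Fin n → ℂ)).symm (v i) with hw
  have hinner : ∀ i j, (inner ℂ (w i) (w j) : ℂ) = ((u i ⬝ᵥ u j : ℝ) : ℂ) := by
    intro i j
    rw [PiLp.inner_apply]
    simp only [hw, hv, WithLp.equiv_symm_apply, PiLp.toLp_apply, RCLike.inner_apply, Complex.ofReal_sum,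
      dotProduct]
    push_cast
    apply Finset.sum_congr rfl
    intro k _
    rw [starRingEnd_apply, Complex.star_def, Complex.conj_ofReal]
    ring
  have hortho : Orthonormal ℂ (fun i : {x // x ∈ s} => w (i : ℕ)) := by
    rw [orthonormal_iff_ite]
    intro i j
    rw [hinner, hon i i.2 j j.2]
    by_cases h : (i : ℕ) = (j : ℕ)
    · simp [h, Subtype.ext h]
    · rw [if_neg h, if_neg (fun hh : i = j => h (congrArg Subtype.val hh))]
      simp
  apply specNorm_le_bound _ hB
  intro x
  set x' : Fin n → ℂ := (WithLp.equiv 2 (Fin n → ℂ)) x with hx'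
  have hMx : (WithLp.equiv 2 (Fin n → ℂ)).symm
      ((∑ i ∈ s, c i • (vecMulVec (u i) (u i)).map Complex.ofReal) *ᵥ x')
      = ∑ i ∈ s.attach, (c i * (v i ⬝ᵥ x')) • w (i : ℕ) := by
    rw [← Finset.sum_attach s (fun i => c i • (vecMulVec (u i) (u i)).map Complex.ofReal)]
    ext k
    simp only [WithLp.equiv_symm_apply, PiLp.toLp_apply, mulVec, dotProduct, Finset.sum_apply,
      Matrix.sum_apply, Matrix.smul_apply, Matrix.map_apply, vecMulVec_apply, smul_eq_mul,
      Finset.sum_mul]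
    rw [Finset.sum_comm, euclid_sum_apply]
    simp only [PiLp.smul_apply, hw, hv, WithLp.equiv_symm_apply, PiLp.toLp_apply,
      smul_eq_mul, Finset.mul_sum]
    apply Finset.sum_congr rfl
    intro i _
    rw [Finset.sum_mul]
    apply Finset.sum_congr rfl
    intro l _
    push_cast
    ring
  rw [hMx]
  have hinner2 : ∀ i : {x // x ∈ s}, (inner ℂ (w (i:ℕ)) x : ℂ) = v i ⬝ᵥ x' := by
    intro i
    rw [PiLp.inner_apply]
    simp only [hw, hv, WithLp.equiv_symm_apply, PiLp.toLp_apply, RCLike.inner_apply, dotProduct, hx']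
    apply Finset.sum_congr rfl
    intro k _
    rw [starRingEnd_apply, Complex.star_def, Complex.conj_ofReal]
    exact mul_comm _ _
  set d : {y // y ∈ s} → ℂ := fun i => c i * (v i ⬝ᵥ x') with hd
  have hattach : s.attach = (Finset.univ : Finset {y // y ∈ s}) := by
    ext i; simp
  have hy2 : ‖∑ i ∈ s.attach, d i • w (i:ℕ)‖ ^ 2 = ∑ i ∈ s.attach, ‖d i‖ ^ 2 := by
    have h1 := hortho.inner_sum d d Finset.univ
    rw [← hattach] at h1
    have h2 := inner_self_eq_norm_sq (𝕜 := ℂ) (∑ i ∈ s.attach, d i • w (i:ℕ))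
    rw [← h2, h1]
    rw [show (RCLike.re : ℂ →+ ℝ) (∑ i ∈ s.attach, (starRingEnd ℂ) (d i) * d i)
        = ∑ i ∈ s.attach, (RCLike.re : ℂ →+ ℝ) ((starRingEnd ℂ) (d i) * d i) from
      map_sum _ _ _]
    apply Finset.sum_congr rfl
    intro i _
    rw [RCLike.conj_mul]
    norm_cast
  have hbessel : ∑ i ∈ s.attach, ‖(inner ℂ (w (i:ℕ)) x : ℂ)‖ ^ 2 ≤ ‖x‖ ^ 2 := by
    rw [hattach]
    exact Orthonormal.sum_inner_products_le x hortho
  have hsum_le : ∑ i ∈ s.attach, ‖d i‖ ^ 2 ≤ B ^ 2 * ‖x‖ ^ 2 := by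
    calc ∑ i ∈ s.attach, ‖d i‖ ^ 2
        ≤ ∑ i ∈ s.attach, B ^ 2 * ‖(inner ℂ (w (i:ℕ)) x : ℂ)‖ ^ 2 := by
          apply Finset.sum_le_sum
          intro i _
          rw [hd, hinner2 i]
          rw [norm_mul, mul_pow]
          apply mul_le_mul_of_nonneg_right _ (by positivity)
          have := hc i i.2
          exact pow_le_pow_left₀ (norm_nonneg _) this 2
      _ = B ^ 2 * ∑ i ∈ s.attach, ‖(inner ℂ (w (i:ℕ)) x : ℂ)‖ ^ 2 := by
          rw [Finset.mul_sum]
      _ ≤ B ^ 2 * ‖x‖ ^ 2 := by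
          apply mul_le_mul_of_nonneg_left hbessel (by positivity)
  have final : ‖∑ i ∈ s.attach, d i • w (i:ℕ)‖ ^ 2 ≤ (B * ‖x‖) ^ 2 := by
    rw [hy2, mul_pow]; exact hsum_le
  have hnn : (0:ℝ) ≤ B * ‖x‖ := mul_nonneg hB (norm_nonneg x)
  exact (pow_le_pow_iff_left₀ (norm_nonneg _) hnn (two_ne_zero)).mp final

lemma vecMulVec_sandwich {n : ℕ} (a b c d : Fin n → ℂ) (M : Matrix (Fin n) (Fin n) ℂ) :
    vecMulVec a b * M * vecMulVec c d = (b ⬝ᵥ M *ᵥ c) • vecMulVec a d := by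
  ext i j
  simp only [mul_apply, vecMulVec_apply, dotProduct, mulVec, Matrix.smul_apply,
    smul_eq_mul, Finset.sum_mul, Finset.mul_sum]
  rw [Finset.sum_comm]
  exact Finset.sum_congr rfl fun l _ => Finset.sum_congr rfl fun k _ => by ring

lemma vecMulVec_map_ofReal {n : ℕ} (a b : Fin n → ℝ) :
    (vecMulVec a b).map Complex.ofReal
      = vecMulVec (fun k => ((a k : ℝ) : ℂ)) (fun k => ((b k : ℝ) : ℂ)) := by
  ext i j
  simp [vecMulVec_apply]

lemma dot_map_ofReal {n : ℕ} (a b : Fin n → ℝ) (E : Matrix (Fin n) (Fin n) ℝ) :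
    (fun k => ((a k : ℝ) : ℂ)) ⬝ᵥ (E.map Complex.ofReal) *ᵥ (fun k => ((b k : ℝ) : ℂ))
      = ((a ⬝ᵥ E *ᵥ b : ℝ) : ℂ) := by
  simp only [dotProduct, mulVec, map_apply]
  push_cast
  rfl

lemma cross_sum_factor {n : ℕ} (E : Matrix (Fin n) (Fin n) ℝ) (u : ℕ → (Fin n → ℝ))
    (c : ℕ → ℂ) (s t : Finset ℕ) :
    ∑ q ∈ s ×ˢ t, (c q.1 * c q.2 * ((u q.1 ⬝ᵥ E *ᵥ u q.2 : ℝ) : ℂ)) •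
        (vecMulVec (u q.1) (u q.2)).map Complex.ofReal
      = (∑ i ∈ s, c i • (vecMulVec (u i) (u i)).map Complex.ofReal)
        * E.map Complex.ofReal
        * (∑ j ∈ t, c j • (vecMulVec (u j) (u j)).map Complex.ofReal) := by
  rw [Finset.sum_mul, Finset.sum_mul]
  rw [Finset.sum_product]
  apply Finset.sum_congr rfl
  intro i _
  rw [Finset.mul_sum]
  apply Finset.sum_congr rfl
  intro j _
  simp only [vecMulVec_map_ofReal]
  rw [smul_mul_assoc, smul_mul_assoc, mul_smul_comm, vecMulVec_sandwich, dot_map_ofReal,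
    smul_smul, smul_smul]

lemma integral_inv_sqrt_sq_add {a : ℝ} (ha : 0 < a) (T : ℝ) :
    ∫ t in (-T)..T, (Real.sqrt (a^2 + t^2))⁻¹ = 2 * Real.arsinh (T / a) := by
  have hderiv : ∀ t : ℝ, HasDerivAt (fun s => Real.arsinh (s / a))
      ((Real.sqrt (a^2 + t^2))⁻¹) t := by
    intro t
    have h1 : HasDerivAt (fun s : ℝ => s / a) (1 / a) t := (hasDerivAt_id t).div_const a
    have h2 := (Real.hasDerivAt_arsinh (t / a)).comp t h1
    refine h2.congr_deriv ?_
    have key : Real.sqrt (a^2 + t^2) = Real.sqrt (1 + (t/a)^2) * a := by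
      rw [show (1 + (t/a)^2) = (a^2+t^2)/a^2 by field_simp]
      rw [Real.sqrt_div (by positivity), Real.sqrt_sq ha.le,
        div_mul_cancel₀ _ (ne_of_gt ha)]
    rw [key, mul_inv]
    ring
  have hcont : Continuous fun t : ℝ => (Real.sqrt (a^2 + t^2))⁻¹ := by
    apply Continuous.inv₀
    · exact Real.continuous_sqrt.comp (by continuity)
    · intro t
      positivity
  rw [intervalIntegral.integral_eq_sub_of_hasDerivAt (fun t _ => hderiv t)
    (hcont.intervalIntegrable _ _)]
  rw [show (-T) / a = -(T/a) by ring, Real.arsinh_neg]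
  ring

lemma arsinh_le_log {x : ℝ} (hx : 0 ≤ x) : Real.arsinh x ≤ Real.log (2*x + 1) := by
  rw [Real.arsinh]
  apply Real.log_le_log (by positivity)
  have h : Real.sqrt (1 + x^2) ≤ x + 1 := by
    rw [show x + 1 = √((x+1)^2) by rw [Real.sqrt_sq (by linarith)]]
    apply Real.sqrt_le_sqrt
    nlinarith
  linarith

set_option maxHeartbeats 1000000 in
/-- **Bound on the cross term of `M₁`** (pairs `(i,j)` with exactly one of `i, j`
in `{1,…,r}`). Indices are 1-based; `σ₁ = ‖A‖`, `x₀ = λ_p − δ_p/2`, `T = 2σ₁`. -/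
theorem M1_cross_term_bound
    {n : ℕ} (A E : Matrix (Fin n) (Fin n) ℝ) (hA : A.IsSymm) (hE : E.IsSymm)
    (lam : ℕ → ℝ)
    (hlam_mono : ∀ i ∈ Finset.Icc 1 n, ∀ j ∈ Finset.Icc 1 n, i ≤ j → lam j ≤ lam i)
    (u : ℕ → (Fin n → ℝ))
    (hu_on : ∀ i ∈ Finset.Icc 1 n, ∀ j ∈ Finset.Icc 1 n,
      u i ⬝ᵥ u j = if i = j then 1 else 0)
    (hu_eig : ∀ i ∈ Finset.Icc 1 n, A *ᵥ u i = lam i • u i)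
    (p : ℕ) (hp1 : 1 ≤ p) (hpn : p < n)
    (r : ℕ) (hpr : p ≤ r) (hrn : r < n)
    (hr_half : |lam p| / 2 ≤ lam p - lam (r + 1))
    (δp : ℝ) (hδp : δp = lam p - lam (p + 1))
    (hE_pos : 0 < specNorm E)
    (hgap_lo : 4 * specNorm E ≤ δp) (hgap_hi : δp ≤ |lam p| / 4)
    (x₀ T : ℝ) (hx₀ : x₀ = lam p - δp / 2) (hT : T = 2 * specNorm A) :
    (∫ t in (-T)..T, specNorm
      (∑ q ∈ (Finset.Icc 1 n ×ˢ Finset.Icc 1 n).filter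
          (fun q => (q.1 ≤ r ∧ r < q.2) ∨ (r < q.1 ∧ q.2 ≤ r)),
        (((u q.1 ⬝ᵥ E *ᵥ u q.2 : ℝ) : ℂ) /
            (((x₀ : ℂ) + t * Complex.I - (lam q.1 : ℂ))
              * ((x₀ : ℂ) + t * Complex.I - (lam q.2 : ℂ)))) •
          (vecMulVec (u q.1) (u q.2)).map Complex.ofReal))
      ≤ 64 * specNorm E / |lam p| * Real.log ((2 * T + δp) / δp) := by
  classical
  have hδ_pos : 0 < δp := lt_of_lt_of_le (by linarith) hgap_lo
  have hlp_pos : 0 < |lam p| := by linarith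
  have hT0 : 0 ≤ T := by
    have := specNorm_nonneg A; rw [hT]; linarith
  set a : ℝ := δp / 2 with ha
  have ha_pos : 0 < a := by positivity
  set C : ℝ := 16 * specNorm E / (3 * |lam p|) with hC
  have hC_pos : 0 < C := by positivity
  set c : ℝ → ℕ → ℂ := fun t i => ((x₀ : ℂ) + t * Complex.I - (lam i : ℂ))⁻¹ with hc
  have hznorm : ∀ (t : ℝ) (i : ℕ), ‖(x₀ : ℂ) + t * Complex.I - (lam i : ℂ)‖
      = Real.sqrt ((x₀ - lam i)^2 + t^2) := by
    intro t i
    rw [Complex.norm_def, Complex.normSq_apply]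
    have hre : ((x₀ : ℂ) + t * Complex.I - (lam i : ℂ)).re = x₀ - lam i := by simp
    have him : ((x₀ : ℂ) + t * Complex.I - (lam i : ℂ)).im = t := by simp
    rw [hre, him]
    congr 1
    ring
  -- gap facts
  have key1 : ∀ i ∈ Finset.Icc 1 r, a ≤ |x₀ - lam i| := by
    intro i hi
    rw [Finset.mem_Icc] at hi
    rcases le_or_gt i p with h | h
    · have h1 : lam p ≤ lam i := hlam_mono i (Finset.mem_Icc.mpr ⟨hi.1, by omega⟩)
        p (Finset.mem_Icc.mpr ⟨hp1, by omega⟩) h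
      rw [le_abs]
      right
      rw [hx₀]; rw [ha]; linarith
    · have h1 : lam i ≤ lam (p+1) := hlam_mono (p+1) (Finset.mem_Icc.mpr ⟨by omega, by omega⟩)
        i (Finset.mem_Icc.mpr ⟨by omega, by omega⟩) (by omega)
      rw [le_abs]
      left
      rw [hx₀]; rw [ha]; rw [hδp] at *; linarith
  have key2 : ∀ j ∈ Finset.Icc (r+1) n, 3 * |lam p| / 8 ≤ |x₀ - lam j| := by
    intro j hj
    rw [Finset.mem_Icc] at hj
    have h1 : lam j ≤ lam (r+1) := hlam_mono (r+1) (Finset.mem_Icc.mpr ⟨by omega, by omega⟩)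
      j (Finset.mem_Icc.mpr ⟨by omega, by omega⟩) hj.1
    rw [le_abs]
    left
    rw [hx₀]
    linarith
  -- norm bounds on the coefficients
  have hcF : ∀ (t : ℝ), ∀ i ∈ Finset.Icc 1 r, ‖c t i‖ ≤ (Real.sqrt (a^2 + t^2))⁻¹ := by
    intro t i hi
    rw [hc]
    simp only
    rw [norm_inv, hznorm]
    apply inv_anti₀ (by positivity)
    apply Real.sqrt_le_sqrt
    have h := key1 i hi
    nlinarith [sq_abs (x₀ - lam i)]
  have hcG : ∀ (t : ℝ), ∀ j ∈ Finset.Icc (r+1) n, ‖c t j‖ ≤ (3 * |lam p| / 8)⁻¹ := by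
    intro t j hj
    rw [hc]
    simp only
    rw [norm_inv, hznorm]
    apply inv_anti₀ (by positivity)
    have h := key2 j hj
    calc 3 * |lam p| / 8 ≤ |x₀ - lam j| := h
      _ = Real.sqrt ((x₀ - lam j)^2) := (Real.sqrt_sq_eq_abs _).symm
      _ ≤ Real.sqrt ((x₀ - lam j)^2 + t^2) := Real.sqrt_le_sqrt (by nlinarith)
  -- matrices F and G
  set Fm : ℝ → Matrix (Fin n) (Fin n) ℂ := fun t =>
    ∑ i ∈ Finset.Icc 1 r, c t i • (vecMulVec (u i) (u i)).map Complex.ofReal with hFm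
  set Gm : ℝ → Matrix (Fin n) (Fin n) ℂ := fun t =>
    ∑ j ∈ Finset.Icc (r+1) n, c t j • (vecMulVec (u j) (u j)).map Complex.ofReal with hGm
  have hFn : ∀ t : ℝ, specNorm (Fm t) ≤ (Real.sqrt (a^2 + t^2))⁻¹ := by
    intro t
    apply specNorm_sum_proj_le _ u (c t) (by positivity)
    · intro i hi j hj
      exact hu_on i (by rw [Finset.mem_Icc] at *; omega) j (by rw [Finset.mem_Icc] at *; omega)
    · exact hcF t
  have hGn : ∀ t : ℝ, specNorm (Gm t) ≤ (3 * |lam p| / 8)⁻¹ := by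
    intro t
    apply specNorm_sum_proj_le _ u (c t) (by positivity)
    · intro i hi j hj
      exact hu_on i (by rw [Finset.mem_Icc] at *; omega) j (by rw [Finset.mem_Icc] at *; omega)
    · exact hcG t
  -- index set split
  have hset : (Finset.Icc 1 n ×ˢ Finset.Icc 1 n).filter
      (fun q => (q.1 ≤ r ∧ r < q.2) ∨ (r < q.1 ∧ q.2 ≤ r))
      = (Finset.Icc 1 r ×ˢ Finset.Icc (r+1) n) ∪ (Finset.Icc (r+1) n ×ˢ Finset.Icc 1 r) := by
    ext q
    simp only [Finset.mem_filter, Finset.mem_product, Finset.mem_union, Finset.mem_Icc]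
    omega
  have hdisj : Disjoint (Finset.Icc 1 r ×ˢ Finset.Icc (r+1) n)
      (Finset.Icc (r+1) n ×ˢ Finset.Icc 1 r) := by
    rw [Finset.disjoint_left]
    intro q hq hq2
    simp only [Finset.mem_product, Finset.mem_Icc] at hq hq2
    omega
  -- pointwise bound
  have hpt : ∀ t : ℝ, specNorm
      (∑ q ∈ (Finset.Icc 1 n ×ˢ Finset.Icc 1 n).filter
          (fun q => (q.1 ≤ r ∧ r < q.2) ∨ (r < q.1 ∧ q.2 ≤ r)),
        (((u q.1 ⬝ᵥ E *ᵥ u q.2 : ℝ) : ℂ) /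
            (((x₀ : ℂ) + t * Complex.I - (lam q.1 : ℂ))
              * ((x₀ : ℂ) + t * Complex.I - (lam q.2 : ℂ)))) •
          (vecMulVec (u q.1) (u q.2)).map Complex.ofReal)
      ≤ C * (Real.sqrt (a^2 + t^2))⁻¹ := by
    intro t
    have hcoeff : ∀ i j : ℕ, (((u i ⬝ᵥ E *ᵥ u j : ℝ) : ℂ) /
        (((x₀ : ℂ) + t * Complex.I - (lam i : ℂ))
          * ((x₀ : ℂ) + t * Complex.I - (lam j : ℂ))))
        = c t i * c t j * ((u i ⬝ᵥ E *ᵥ u j : ℝ) : ℂ) := by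
      intro i j
      rw [hc]
      simp only
      rw [div_eq_mul_inv, mul_inv]
      ring
    have hrw : (∑ q ∈ (Finset.Icc 1 n ×ˢ Finset.Icc 1 n).filter
          (fun q => (q.1 ≤ r ∧ r < q.2) ∨ (r < q.1 ∧ q.2 ≤ r)),
        (((u q.1 ⬝ᵥ E *ᵥ u q.2 : ℝ) : ℂ) /
            (((x₀ : ℂ) + t * Complex.I - (lam q.1 : ℂ))
              * ((x₀ : ℂ) + t * Complex.I - (lam q.2 : ℂ)))) •
          (vecMulVec (u q.1) (u q.2)).map Complex.ofReal)
        = Fm t * E.map Complex.ofReal * Gm t + Gm t * E.map Complex.ofReal * Fm t := by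
      rw [hset, Finset.sum_union hdisj]
      congr 1
      · rw [← cross_sum_factor E u (c t)]
        apply Finset.sum_congr rfl
        intro q _
        rw [hcoeff]
      · rw [← cross_sum_factor E u (c t)]
        apply Finset.sum_congr rfl
        intro q _
        rw [hcoeff]
    rw [hrw]
    have hEc : specNorm (E.map Complex.ofReal) ≤ specNorm E := specNorm_map_ofReal_le E
    set bF : ℝ := (Real.sqrt (a^2 + t^2))⁻¹ with hbF
    set bG : ℝ := (3 * |lam p| / 8)⁻¹ with hbG
    have hbF_pos : 0 < bF := by positivity
    have hbG_pos : 0 < bG := by positivity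
    have h1 : specNorm (Fm t * E.map Complex.ofReal * Gm t) ≤ bF * specNorm E * bG := by
      calc specNorm (Fm t * E.map Complex.ofReal * Gm t)
          ≤ specNorm (Fm t * E.map Complex.ofReal) * specNorm (Gm t) := specNorm_mul_le _ _
        _ ≤ (specNorm (Fm t) * specNorm (E.map Complex.ofReal)) * specNorm (Gm t) :=
            mul_le_mul_of_nonneg_right (specNorm_mul_le _ _) (specNorm_nonneg _)
        _ ≤ bF * specNorm E * bG := by
            apply mul_le_mul _ (hGn t) (specNorm_nonneg _) (by positivity)
            exact mul_le_mul (hFn t) hEc (specNorm_nonneg _) hbF_pos.le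
    have h2 : specNorm (Gm t * E.map Complex.ofReal * Fm t) ≤ bG * specNorm E * bF := by
      calc specNorm (Gm t * E.map Complex.ofReal * Fm t)
          ≤ specNorm (Gm t * E.map Complex.ofReal) * specNorm (Fm t) := specNorm_mul_le _ _
        _ ≤ (specNorm (Gm t) * specNorm (E.map Complex.ofReal)) * specNorm (Fm t) :=
            mul_le_mul_of_nonneg_right (specNorm_mul_le _ _) (specNorm_nonneg _)
        _ ≤ bG * specNorm E * bF := by
            apply mul_le_mul _ (hFn t) (specNorm_nonneg _) (by positivity)
            exact mul_le_mul (hGn t) hEc (specNorm_nonneg _) hbG_pos.le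
    calc specNorm (Fm t * E.map Complex.ofReal * Gm t + Gm t * E.map Complex.ofReal * Fm t)
        ≤ specNorm (Fm t * E.map Complex.ofReal * Gm t)
          + specNorm (Gm t * E.map Complex.ofReal * Fm t) := specNorm_add_le _ _
      _ ≤ bF * specNorm E * bG + bG * specNorm E * bF := add_le_add h1 h2
      _ = C * bF := by
          rw [hC, hbG]
          field_simp
          ring
  -- RHS is nonneg
  have hlog_nonneg : 0 ≤ Real.log ((2 * T + δp) / δp) := by
    apply Real.log_nonneg
    rw [le_div_iff₀ hδ_pos]
    linarith
  have hRHS_nonneg : 0 ≤ 64 * specNorm E / |lam p| * Real.log ((2 * T + δp) / δp) := by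
    apply mul_nonneg _ hlog_nonneg
    positivity
  by_cases hint : IntervalIntegrable (fun t : ℝ => specNorm
      (∑ q ∈ (Finset.Icc 1 n ×ˢ Finset.Icc 1 n).filter
          (fun q => (q.1 ≤ r ∧ r < q.2) ∨ (r < q.1 ∧ q.2 ≤ r)),
        (((u q.1 ⬝ᵥ E *ᵥ u q.2 : ℝ) : ℂ) /
            (((x₀ : ℂ) + t * Complex.I - (lam q.1 : ℂ))
              * ((x₀ : ℂ) + t * Complex.I - (lam q.2 : ℂ)))) •
          (vecMulVec (u q.1) (u q.2)).map Complex.ofReal)) MeasureTheory.volume (-T) T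
  swap
  · rw [intervalIntegral.integral_undef hint]
    exact hRHS_nonneg
  · have hg_cont : Continuous fun t : ℝ => C * (Real.sqrt (a^2 + t^2))⁻¹ := by
      apply continuous_const.mul
      apply Continuous.inv₀
      · exact Real.continuous_sqrt.comp (continuous_const.add (continuous_pow 2))
      · intro t
        positivity
    have hg_int : IntervalIntegrable (fun t : ℝ => C * (Real.sqrt (a^2 + t^2))⁻¹)
        MeasureTheory.volume (-T) T := hg_cont.intervalIntegrable _ _
    have step1 := intervalIntegral.integral_mono_on (by linarith : -T ≤ T) hint hg_int
      (fun t _ => hpt t)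
    have step2 : (∫ t in (-T)..T, C * (Real.sqrt (a^2 + t^2))⁻¹)
        = C * (2 * Real.arsinh (T / a)) := by
      rw [intervalIntegral.integral_const_mul, integral_inv_sqrt_sq_add ha_pos]
    have e1 : T / a = 2 * T / δp := by
      rw [ha]; field_simp
    have e2 : (2 * T + δp) / δp = 2 * T / δp + 1 := by
      field_simp
    have l1 : Real.arsinh (2 * T / δp) ≤ Real.log (2 * (2 * T / δp) + 1) :=
      arsinh_le_log (by positivity)
    have l2 : Real.log (2 * (2 * T / δp) + 1) ≤ 2 * Real.log (2 * T / δp + 1) := by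
      rw [show (2:ℝ) * Real.log (2 * T / δp + 1) = Real.log ((2 * T / δp + 1)^2) by
        rw [Real.log_pow]; norm_num]
      apply Real.log_le_log (by positivity)
      have h0 : 0 ≤ 2 * T / δp := by positivity
      nlinarith
    have hfrac : C * 4 ≤ 64 * specNorm E / |lam p| := by
      rw [hC, div_mul_eq_mul_div, div_le_div_iff₀ (by positivity) (by positivity)]
      nlinarith [mul_pos hE_pos hlp_pos]
    refine le_trans step1 ?_
    rw [step2]
    calc C * (2 * Real.arsinh (T / a))
        ≤ C * (2 * (2 * Real.log (2 * T / δp + 1))) := by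
          apply mul_le_mul_of_nonneg_left _ hC_pos.le
          apply mul_le_mul_of_nonneg_left _ (by norm_num)
          rw [e1]
          exact le_trans l1 l2
      _ = (C * 4) * Real.log (2 * T / δp + 1) := by ring
      _ ≤ (64 * specNorm E / |lam p|) * Real.log (2 * T / δp + 1) := by
          apply mul_le_mul_of_nonneg_right hfrac
          apply Real.log_nonneg
          have h0 : 0 ≤ 2 * T / δp := by positivity
          linarith
      _ = 64 * specNorm E / |lam p| * Real.log ((2 * T + δp) / δp) := by rw [e2]
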